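/- There exists a utility-target auction instance (with valuations over three outcomes) and quasi-truthful bids forming a Nash equilibrium (no unilateral deviation improves any bidder's utility) that is not cooperatively envy-free: a pair of bidders would jointly profit from raising their bids to make an alternative outcome win, but neither can do so unilaterally. -/

import Mathlib

noncomputable section NCEF

def vv : Fin 4 → Fin 3 → ℝ := ![![1,2,0], ![1,2,0], ![2,1,0], ![0,0,1]]
def pp : Fin 4 → ℝ := ![2,2,1,0]
def tot (σ : Fin 4 → ℝ) (o : Fin 3) : ℝ := ∑ i, max (vv i o - σ i) 0
def sel3 (σ : Fin 4 → ℝ) : Fin 3 :=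
  if tot σ 1 > tot σ 0 ∧ tot σ 1 > tot σ 2 then 1
  else if tot σ 2 > tot σ 0 then 2 else 0

lemma tot_expand (σ : Fin 4 → ℝ) (o : Fin 3) :
    tot σ o = max (vv 0 o - σ 0) 0 + max (vv 1 o - σ 1) 0
      + max (vv 2 o - σ 2) 0 + max (vv 3 o - σ 3) 0 := by
  simp [tot, Fin.sum_univ_four]

lemma sel3_max (σ : Fin 4 → ℝ) (o : Fin 3) : tot σ o ≤ tot σ (sel3 σ) := by
  unfold sel3
  split_ifs with h1 h2
  · fin_cases o <;> simp <;> linarith [h1.1, h1.2]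
  · push_neg at h1
    fin_cases o <;> simp <;> rcases lt_or_ge (tot σ 0) (tot σ 1) with h | h <;>
      first | linarith [h1 h] | linarith
  · push_neg at h1 h2
    fin_cases o <;> simp <;> rcases lt_or_ge (tot σ 0) (tot σ 1) with h | h <;>
      first | linarith [h1 h] | linarith

lemma sel3_pp : sel3 pp = 0 := by
  have h0 : tot pp 0 = 1 := by rw [tot_expand]; norm_num [vv, pp, Matrix.cons_val_two, Matrix.cons_val_three]
  have h1 : tot pp 1 = 0 := by rw [tot_expand]; norm_num [vv, pp, Matrix.cons_val_two, Matrix.cons_val_three]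
  have h2 : tot pp 2 = 1 := by rw [tot_expand]; norm_num [vv, pp, Matrix.cons_val_two, Matrix.cons_val_three]
  simp [sel3, h0, h1, h2]

lemma totA (t : ℝ) (ht : 0 ≤ t) :
    tot (Function.update pp 0 t) 0 = max (1 - t) 0 + 1 ∧
    tot (Function.update pp 0 t) 1 = max (2 - t) 0 ∧
    tot (Function.update pp 0 t) 2 = 1 := by
  refine ⟨?_, ?_, ?_⟩ <;> rw [tot_expand] <;>
    norm_num [Function.update_apply, vv, pp, Matrix.cons_val_two, Matrix.cons_val_three,
      show ¬(1:Fin 4) = 0 by decide, show ¬(2:Fin 4) = 0 by decide,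
      show ¬(3:Fin 4) = 0 by decide] <;> linarith

lemma totB (t : ℝ) (ht : 0 ≤ t) :
    tot (Function.update pp 1 t) 0 = max (1 - t) 0 + 1 ∧
    tot (Function.update pp 1 t) 1 = max (2 - t) 0 ∧
    tot (Function.update pp 1 t) 2 = 1 := by
  refine ⟨?_, ?_, ?_⟩ <;> rw [tot_expand] <;>
    norm_num [Function.update_apply, vv, pp, Matrix.cons_val_two, Matrix.cons_val_three,
      show ¬(0:Fin 4) = 1 by decide, show ¬(2:Fin 4) = 1 by decide,
      show ¬(3:Fin 4) = 1 by decide] <;> linarith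

lemma totC (t : ℝ) (ht : 0 ≤ t) :
    tot (Function.update pp 2 t) 0 = max (2 - t) 0 ∧
    tot (Function.update pp 2 t) 1 = max (1 - t) 0 ∧
    tot (Function.update pp 2 t) 2 = 1 := by
  refine ⟨?_, ?_, ?_⟩ <;> rw [tot_expand] <;>
    norm_num [Function.update_apply, vv, pp, Matrix.cons_val_two, Matrix.cons_val_three,
      show ¬(0:Fin 4) = 2 by decide, show ¬(1:Fin 4) = 2 by decide,
      show ¬(3:Fin 4) = 2 by decide] <;> linarith

lemma totE (t : ℝ) (ht : 0 ≤ t) :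
    tot (Function.update pp 3 t) 0 = 1 ∧
    tot (Function.update pp 3 t) 1 = 0 ∧
    tot (Function.update pp 3 t) 2 = max (1 - t) 0 := by
  refine ⟨?_, ?_, ?_⟩ <;> rw [tot_expand] <;>
    norm_num [Function.update_apply, vv, pp, Matrix.cons_val_two, Matrix.cons_val_three,
      show ¬(0:Fin 4) = 3 by decide, show ¬(1:Fin 4) = 3 by decide,
      show ¬(2:Fin 4) = 3 by decide] <;> linarith

lemma selA (t : ℝ) (ht : 0 ≤ t) : sel3 (Function.update pp 0 t) = 0 := by
  obtain ⟨h0, h1, h2⟩ := totA t ht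
  have m1 : (0:ℝ) ≤ max (1 - t) 0 := le_max_right _ _
  have m2 : max (2 - t) 0 ≤ max (1 - t) 0 + 1 :=
    max_le (by linarith [le_max_left (1-t) (0:ℝ)]) (by linarith)
  simp only [sel3, h0, h1, h2]
  rw [if_neg (by push_neg; intro h; linarith), if_neg (by push_neg; linarith)]

lemma selB (t : ℝ) (ht : 0 ≤ t) : sel3 (Function.update pp 1 t) = 0 := by
  obtain ⟨h0, h1, h2⟩ := totB t ht
  have m1 : (0:ℝ) ≤ max (1 - t) 0 := le_max_right _ _
  have m2 : max (2 - t) 0 ≤ max (1 - t) 0 + 1 :=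
    max_le (by linarith [le_max_left (1-t) (0:ℝ)]) (by linarith)
  simp only [sel3, h0, h1, h2]
  rw [if_neg (by push_neg; intro h; linarith), if_neg (by push_neg; linarith)]

lemma selC_le (t : ℝ) (ht : 0 ≤ t) (h1t : t ≤ 1) :
    sel3 (Function.update pp 2 t) = 0 := by
  obtain ⟨h0, h1, h2⟩ := totC t ht
  have m0 : 2 - t ≤ max (2 - t) 0 := le_max_left _ _
  have m1 : max (1 - t) 0 ≤ max (2 - t) 0 := max_le (by linarith) (le_max_right _ _)
  simp only [sel3, h0, h1, h2]
  rw [if_neg (by push_neg; intro h; linarith), if_neg (by push_neg; linarith)]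

lemma selC_gt (t : ℝ) (ht : 0 ≤ t) (h1t : 1 < t) :
    sel3 (Function.update pp 2 t) = 2 := by
  obtain ⟨h0, h1, h2⟩ := totC t ht
  have e1 : max (1 - t) 0 = 0 := max_eq_right (by linarith)
  have m0 : max (2 - t) 0 < 1 := max_lt (by linarith) (by norm_num)
  simp only [sel3, h0, h1, h2, e1]
  rw [if_neg (by push_neg; intro h; linarith), if_pos (by linarith)]

lemma selE (t : ℝ) (ht : 0 ≤ t) : sel3 (Function.update pp 3 t) = 0 := by
  obtain ⟨h0, h1, h2⟩ := totE t ht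
  have m2 : max (1 - t) 0 ≤ 1 := max_le (by linarith) (by norm_num)
  simp only [sel3, h0, h1, h2]
  rw [if_neg (by push_neg; intro h; linarith), if_neg (by push_neg; linarith)]

lemma nashA (t : ℝ) (ht : 0 ≤ t) :
    vv 0 (sel3 (Function.update pp 0 t)) -
        max (vv 0 (sel3 (Function.update pp 0 t)) - t) 0
      ≤ vv 0 (sel3 pp) - max (vv 0 (sel3 pp) - pp 0) 0 := by
  rw [selA t ht, sel3_pp]
  have : 1 - t ≤ max (1 - t) 0 := le_max_left _ _
  have : (0:ℝ) ≤ max (1 - t) 0 := le_max_right _ _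
  norm_num [vv, pp]

lemma nashB (t : ℝ) (ht : 0 ≤ t) :
    vv 1 (sel3 (Function.update pp 1 t)) -
        max (vv 1 (sel3 (Function.update pp 1 t)) - t) 0
      ≤ vv 1 (sel3 pp) - max (vv 1 (sel3 pp) - pp 1) 0 := by
  rw [selB t ht, sel3_pp]
  have : (0:ℝ) ≤ max (1 - t) 0 := le_max_right _ _
  norm_num [vv, pp]

lemma nashC (t : ℝ) (ht : 0 ≤ t) :
    vv 2 (sel3 (Function.update pp 2 t)) -
        max (vv 2 (sel3 (Function.update pp 2 t)) - t) 0
      ≤ vv 2 (sel3 pp) - max (vv 2 (sel3 pp) - pp 2) 0 := by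
  rcases le_or_gt t 1 with h | h
  · rw [selC_le t ht h, sel3_pp]
    have : 2 - t ≤ max (2 - t) 0 := le_max_left _ _
    norm_num [vv, pp, Matrix.cons_val_two, Matrix.cons_val_three]
    linarith
  · rw [selC_gt t ht h, sel3_pp]
    have e : max (-t) 0 = 0 := max_eq_right (by linarith)
    norm_num [vv, pp, e, Matrix.cons_val_two, Matrix.cons_val_three]

lemma nashE (t : ℝ) (ht : 0 ≤ t) :
    vv 3 (sel3 (Function.update pp 3 t)) -
        max (vv 3 (sel3 (Function.update pp 3 t)) - t) 0
      ≤ vv 3 (sel3 pp) - max (vv 3 (sel3 pp) - pp 3) 0 := by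
  rw [selE t ht, sel3_pp]
  have e : max (-t) 0 = 0 := max_eq_right (by linarith)
  norm_num [vv, pp, e, Matrix.cons_val_two, Matrix.cons_val_three]

lemma sel_joint : sel3 (Function.update (Function.update pp 0 (5/4)) 1 (5/4)) = 1 := by
  have h0 : tot (Function.update (Function.update pp 0 (5/4)) 1 (5/4)) 0 = 1 := by
    rw [tot_expand]
    norm_num [Function.update_apply, vv, pp, Matrix.cons_val_two, Matrix.cons_val_three,
      show ¬(0:Fin 4) = 1 by decide, show ¬(2:Fin 4) = 1 by decide,
      show ¬(3:Fin 4) = 1 by decide, show ¬(2:Fin 4) = 0 by decide,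
      show ¬(3:Fin 4) = 0 by decide]
  have h1 : tot (Function.update (Function.update pp 0 (5/4)) 1 (5/4)) 1 = 3/2 := by
    rw [tot_expand]
    norm_num [Function.update_apply, vv, pp, Matrix.cons_val_two, Matrix.cons_val_three,
      show ¬(0:Fin 4) = 1 by decide, show ¬(2:Fin 4) = 1 by decide,
      show ¬(3:Fin 4) = 1 by decide, show ¬(2:Fin 4) = 0 by decide,
      show ¬(3:Fin 4) = 0 by decide]
  have h2 : tot (Function.update (Function.update pp 0 (5/4)) 1 (5/4)) 2 = 1 := by
    rw [tot_expand]
    norm_num [Function.update_apply, vv, pp, Matrix.cons_val_two, Matrix.cons_val_three,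
      show ¬(0:Fin 4) = 1 by decide, show ¬(2:Fin 4) = 1 by decide,
      show ¬(3:Fin 4) = 1 by decide, show ¬(2:Fin 4) = 0 by decide,
      show ¬(3:Fin 4) = 0 by decide]
  simp only [sel3, h0, h1, h2]
  rw [if_pos (by constructor <;> norm_num)]

/-- **A Nash equilibrium of a utility-target auction need not be cooperatively
envy-free.** There is a utility-target auction instance over three outcomes and
quasi-truthful bids (with an outcome-selection rule `sel` maximizing the total
bid) forming a Nash equilibrium — no unilateral deviation improves any bidder's
utility — that violates the CEF condition at some outcome; moreover a pair of
bidders would jointly profit by raising their bids (lowering their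
utility-targets) to make an alternative outcome win. -/
theorem nash_not_cef_exists :
    ∃ (n : ℕ) (v : Fin n → Fin 3 → ℝ) (π : Fin n → ℝ)
      (sel : (Fin n → ℝ) → Fin 3),
      (∀ i o, 0 ≤ v i o) ∧ (∀ i, 0 ≤ π i) ∧
      -- sel always picks an outcome maximizing the total effective bid
      (∀ (σ : Fin n → ℝ) (o : Fin 3),
        ∑ i, max (v i o - σ i) 0 ≤ ∑ i, max (v i (sel σ) - σ i) 0) ∧
      -- Nash equilibrium: no unilateral deviation improves any bidder
      (∀ (i : Fin n) (t : ℝ), 0 ≤ t →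
        v i (sel (Function.update π i t)) -
            max (v i (sel (Function.update π i t)) - t) 0
          ≤ v i (sel π) - max (v i (sel π) - π i) 0) ∧
      -- not cooperatively envy-free
      (∃ o : Fin 3,
        ∑ i, (max (v i (sel π) - π i) 0 - max (v i o - π i) 0) <
          ∑ i, max ((v i o - max (v i o - π i) 0) -
            (v i (sel π) - max (v i (sel π) - π i) 0)) 0) ∧
      -- a pair of bidders jointly profits by raising their bids
      (∃ (i j : Fin n), i ≠ j ∧ ∃ p q : ℝ,
        0 ≤ p ∧ 0 ≤ q ∧ p ≤ π i ∧ q ≤ π j ∧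
        (let σ := Function.update (Function.update π i p) j q
         v i (sel π) - max (v i (sel π) - π i) 0 <
            v i (sel σ) - max (v i (sel σ) - p) 0 ∧
         v j (sel π) - max (v j (sel π) - π j) 0 <
            v j (sel σ) - max (v j (sel σ) - q) 0)) := by
  refine ⟨4, vv, pp, sel3, ?_, ?_, sel3_max, ?_, ?_, ?_⟩
  · intro i o; fin_cases i <;> fin_cases o <;> norm_num [vv]
  · intro i; fin_cases i <;> norm_num [pp]
  · intro i t ht
    fin_cases i
    · exact nashA t ht
    · exact nashB t ht
    · exact nashC t ht
    · exact nashE t ht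
  · refine ⟨1, ?_⟩
    rw [sel3_pp, Fin.sum_univ_four, Fin.sum_univ_four]
    norm_num [vv, pp, Matrix.cons_val_two, Matrix.cons_val_three]
  · refine ⟨0, 1, by decide, 5/4, 5/4, by norm_num, by norm_num,
      by norm_num [pp], by norm_num [pp], ?_⟩
    simp only [sel3_pp, sel_joint]
    norm_num [vv, pp, Matrix.cons_val_two, Matrix.cons_val_three]

end NCEF
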